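/- Fix r > 0 and for ℓ > 0 define K₀(ℓ) = (4/(r³ℓ²))·∫₀^ℓ z²(ℓ − z)e^{−2z/r} dz. Then lim_{ℓ→0⁺} K₀(ℓ) = 0, lim_{ℓ→∞} ℓ·K₀(ℓ) = 1, and sup_{ℓ>0} K₀(ℓ) < ∞. -/

import Mathlib

open MeasureTheory

private lemma stmt16_key (r : ℝ) (hr : 0 < r) (ℓ : ℝ) :
    (∫ z in (0:ℝ)..ℓ, z ^ 2 * (ℓ - z) * Real.exp (-(2 * z) / r)) =
      (ℓ * r ^ 3 / 4 - 3 * r ^ 4 / 8) +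
        Real.exp (-(2 * ℓ) / r) * (r ^ 2 * ℓ ^ 2 / 4 + r ^ 3 * ℓ / 2 + 3 * r ^ 4 / 8) := by
  have hr0 : r ≠ 0 := hr.ne'
  set q : ℝ → ℝ := fun z => -(r/2) * z ^ 3 + (ℓ * r / 2 - 3 * r ^ 2 / 4) * z ^ 2
    + (ℓ * r ^ 2 / 2 - 3 * r ^ 3 / 4) * z + (ℓ * r ^ 3 / 4 - 3 * r ^ 4 / 8) with hq
  have hderiv : ∀ x ∈ Set.uIcc (0:ℝ) ℓ,
      HasDerivAt (fun z => -(Real.exp (-(2 * z) / r) * q z))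
        (x ^ 2 * (ℓ - x) * Real.exp (-(2 * x) / r)) x := by
    intro x _
    have he : HasDerivAt (fun z : ℝ => Real.exp (-(2 * z) / r))
        ((-(2:ℝ)/r) * Real.exp (-(2 * x) / r)) x := by
      have h1 : HasDerivAt (fun z : ℝ => -(2 * z) / r) (-(2:ℝ)/r) x := by
        simpa using ((hasDerivAt_id x).const_mul (-2 : ℝ)).div_const r
      simpa [mul_comm, Function.comp_def] using (Real.hasDerivAt_exp (-(2 * x) / r)).comp x h1
    have hqd : HasDerivAt q (-(r/2) * (3 * x ^ 2) + (ℓ * r / 2 - 3 * r ^ 2 / 4) * (2 * x)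
        + (ℓ * r ^ 2 / 2 - 3 * r ^ 3 / 4)) x := by
      rw [hq]
      have h := ((((hasDerivAt_pow 3 x).const_mul (-(r/2) : ℝ)).add
        ((hasDerivAt_pow 2 x).const_mul (ℓ * r / 2 - 3 * r ^ 2 / 4))).add
        ((hasDerivAt_id x).const_mul (ℓ * r ^ 2 / 2 - 3 * r ^ 3 / 4))).add_const
        (ℓ * r ^ 3 / 4 - 3 * r ^ 4 / 8)
      simp only [id_eq] at h
      refine h.congr_deriv ?_
      push_cast
      ring
    have := (he.mul hqd).neg
    refine this.congr_deriv ?_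
    field_simp
    ring
  have hcont : IntervalIntegrable (fun z => z ^ 2 * (ℓ - z) * Real.exp (-(2 * z) / r))
      volume 0 ℓ := by
    apply Continuous.intervalIntegrable
    continuity
  have := intervalIntegral.integral_eq_sub_of_hasDerivAt hderiv hcont
  rw [this, hq]
  simp only []
  rw [show -(2 * (0:ℝ)) / r = 0 by ring, Real.exp_zero]
  ring

/-- Fix `r > 0` and let `K₀(ℓ) = (4/(r³ℓ²))·∫₀^ℓ z²(ℓ−z)e^{−2z/r} dz`.
Then `lim_{ℓ→0⁺} K₀(ℓ) = 0`, `lim_{ℓ→∞} ℓ·K₀(ℓ) = 1`, and `sup_{ℓ>0} K₀(ℓ) < ∞`. -/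
theorem stmt_16 (r : ℝ) (hr : 0 < r) (K : ℝ → ℝ)
    (hK : ∀ ℓ : ℝ, 0 < ℓ →
      K ℓ = (4 / (r ^ 3 * ℓ ^ 2)) *
        ∫ z in (0:ℝ)..ℓ, z ^ 2 * (ℓ - z) * Real.exp (-(2 * z) / r)) :
    Filter.Tendsto K (nhdsWithin 0 (Set.Ioi 0)) (nhds 0) ∧
    Filter.Tendsto (fun ℓ : ℝ => ℓ * K ℓ) Filter.atTop (nhds 1) ∧
    BddAbove (K '' Set.Ioi 0) := by
  have hr0 : r ≠ 0 := hr.ne'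
  -- nonnegativity of K on (0, ∞)
  have hnonneg : ∀ ℓ : ℝ, 0 < ℓ → 0 ≤ K ℓ := by
    intro ℓ hℓ
    rw [hK ℓ hℓ]
    apply mul_nonneg (by positivity)
    apply intervalIntegral.integral_nonneg hℓ.le
    intro u hu
    have h1 : (0:ℝ) ≤ u ^ 2 := sq_nonneg u
    have h2 : 0 ≤ ℓ - u := sub_nonneg.2 hu.2
    positivity
  -- bound K ℓ ≤ 4 * ℓ² / r³ (good near zero)
  have hbound1 : ∀ ℓ : ℝ, 0 < ℓ → K ℓ ≤ 4 * ℓ ^ 2 / r ^ 3 := by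
    intro ℓ hℓ
    have hI : ‖∫ z in (0:ℝ)..ℓ, z ^ 2 * (ℓ - z) * Real.exp (-(2 * z) / r)‖
        ≤ ℓ ^ 3 * |ℓ - 0| := by
      apply intervalIntegral.norm_integral_le_of_norm_le_const
      intro z hz
      rw [Set.uIoc_of_le hℓ.le] at hz
      have hz0 : 0 < z := hz.1
      have hzℓ : z ≤ ℓ := hz.2
      have he : Real.exp (-(2 * z) / r) ≤ 1 := by
        apply Real.exp_le_one_iff.2
        rw [neg_div]
        have : 0 ≤ 2 * z / r := by positivity
        linarith
      rw [Real.norm_eq_abs, abs_of_nonneg (by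
        have := sub_nonneg.2 hzℓ
        positivity)]
      calc z ^ 2 * (ℓ - z) * Real.exp (-(2 * z) / r)
          ≤ ℓ ^ 2 * ℓ * 1 := by
            apply mul_le_mul _ he (Real.exp_nonneg _) (by positivity)
            apply mul_le_mul (pow_le_pow_left₀ hz0.le hzℓ 2) (by linarith) (by linarith)
              (by positivity)
        _ = ℓ ^ 3 := by ring
    rw [hK ℓ hℓ]
    have hc : (0:ℝ) < 4 / (r ^ 3 * ℓ ^ 2) := by positivity
    have hI' : (∫ z in (0:ℝ)..ℓ, z ^ 2 * (ℓ - z) * Real.exp (-(2 * z) / r)) ≤ ℓ ^ 4 := by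
      have := (le_abs_self _).trans ((Real.norm_eq_abs _ ▸ hI))
      rw [abs_of_nonneg (by linarith : (0:ℝ) ≤ ℓ - 0)] at this
      nlinarith
    calc (4 / (r ^ 3 * ℓ ^ 2)) * ∫ z in (0:ℝ)..ℓ, z ^ 2 * (ℓ - z) * Real.exp (-(2 * z) / r)
        ≤ (4 / (r ^ 3 * ℓ ^ 2)) * ℓ ^ 4 := by exact mul_le_mul_of_nonneg_left hI' hc.le
      _ = 4 * ℓ ^ 2 / r ^ 3 := by field_simp
  -- uniform bound K ℓ ≤ 4 / r
  have hbound2 : ∀ ℓ : ℝ, 0 < ℓ → K ℓ ≤ 4 / r := by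
    intro ℓ hℓ
    have hI : ‖∫ z in (0:ℝ)..ℓ, z ^ 2 * (ℓ - z) * Real.exp (-(2 * z) / r)‖
        ≤ r ^ 2 * ℓ * |ℓ - 0| := by
      apply intervalIntegral.norm_integral_le_of_norm_le_const
      intro z hz
      rw [Set.uIoc_of_le hℓ.le] at hz
      have hz0 : 0 < z := hz.1
      have hzℓ : z ≤ ℓ := hz.2
      -- z² e^{-2z/r} ≤ r²  since  (z/r) ≤ 1 + z/r ≤ e^{z/r}
      have hkey : z ^ 2 * Real.exp (-(2 * z) / r) ≤ r ^ 2 := by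
        have ht : z / r + 1 ≤ Real.exp (z / r) := Real.add_one_le_exp _
        have ht0 : 0 ≤ z / r := by positivity
        have hsq : (z / r) ^ 2 ≤ Real.exp (z / r) ^ 2 := by
          apply pow_le_pow_left₀ ht0
          linarith
        have hexp2 : Real.exp (z / r) ^ 2 = Real.exp (2 * z / r) := by
          rw [← Real.exp_nat_mul]
          norm_num
          ring_nf
        have h2 : z ^ 2 / r ^ 2 ≤ Real.exp (2 * z / r) := by
          calc z ^ 2 / r ^ 2 = (z / r) ^ 2 := by rw [div_pow]
            _ ≤ Real.exp (z / r) ^ 2 := hsq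
            _ = Real.exp (2 * z / r) := hexp2
        have hepos : (0:ℝ) < Real.exp (2 * z / r) := Real.exp_pos _
        rw [show -(2 * z) / r = -(2 * z / r) by ring, Real.exp_neg]
        rw [mul_inv_le_iff₀ hepos]
        rw [mul_comm]
        rwa [div_le_iff₀ (by positivity : (0:ℝ) < r ^ 2)] at h2
      rw [Real.norm_eq_abs, abs_of_nonneg (by
        have := sub_nonneg.2 hzℓ
        positivity)]
      calc z ^ 2 * (ℓ - z) * Real.exp (-(2 * z) / r)
          = (z ^ 2 * Real.exp (-(2 * z) / r)) * (ℓ - z) := by ring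
        _ ≤ r ^ 2 * ℓ := by
            apply mul_le_mul hkey (by linarith) (by linarith) (by positivity)
    rw [hK ℓ hℓ]
    have hc : (0:ℝ) < 4 / (r ^ 3 * ℓ ^ 2) := by positivity
    have hI' : (∫ z in (0:ℝ)..ℓ, z ^ 2 * (ℓ - z) * Real.exp (-(2 * z) / r))
        ≤ r ^ 2 * ℓ ^ 2 := by
      have := (le_abs_self _).trans ((Real.norm_eq_abs _ ▸ hI))
      rw [abs_of_nonneg (by linarith : (0:ℝ) ≤ ℓ - 0)] at this
      nlinarith
    calc (4 / (r ^ 3 * ℓ ^ 2)) * ∫ z in (0:ℝ)..ℓ, z ^ 2 * (ℓ - z) * Real.exp (-(2 * z) / r)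
        ≤ (4 / (r ^ 3 * ℓ ^ 2)) * (r ^ 2 * ℓ ^ 2) := mul_le_mul_of_nonneg_left hI' hc.le
      _ = 4 / r := by field_simp
  refine ⟨?_, ?_, ?_⟩
  · -- limit at 0⁺ by squeezing
    have hupper : Filter.Tendsto (fun ℓ : ℝ => 4 * ℓ ^ 2 / r ^ 3)
        (nhdsWithin 0 (Set.Ioi 0)) (nhds 0) := by
      have : Filter.Tendsto (fun ℓ : ℝ => 4 * ℓ ^ 2 / r ^ 3) (nhds 0)
          (nhds (4 * (0:ℝ) ^ 2 / r ^ 3)) := by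
        apply Filter.Tendsto.div_const
        exact (continuous_const.mul (continuous_pow 2)).tendsto 0
      simpa using this.mono_left nhdsWithin_le_nhds
    apply tendsto_of_tendsto_of_tendsto_of_le_of_le' tendsto_const_nhds hupper
    · filter_upwards [self_mem_nhdsWithin] with ℓ hℓ
      exact hnonneg ℓ hℓ
    · filter_upwards [self_mem_nhdsWithin] with ℓ hℓ
      exact hbound1 ℓ hℓ
  · -- limit of ℓ K(ℓ) at ∞
    set g : ℝ → ℝ := fun ℓ =>
      1 + (-(3 * r / 2)) * ℓ⁻¹ + (Real.exp (-(2 * ℓ) / r) * (ℓ / r)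
        + Real.exp (-(2 * ℓ) / r) * 2 + Real.exp (-(2 * ℓ) / r) * ((3 * r / 2) * ℓ⁻¹))
      with hg
    have heq : ∀ ℓ : ℝ, 0 < ℓ → ℓ * K ℓ = g ℓ := by
      intro ℓ hℓ
      rw [hK ℓ hℓ, stmt16_key r hr ℓ, hg]
      have hℓ0 : ℓ ≠ 0 := hℓ.ne'
      field_simp
      ring
    have hinv : Filter.Tendsto (fun ℓ : ℝ => ℓ⁻¹) Filter.atTop (nhds 0) :=
      tendsto_inv_atTop_zero
    have hexp : Filter.Tendsto (fun ℓ : ℝ => Real.exp (-(2 * ℓ) / r))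
        Filter.atTop (nhds 0) := by
      have harg : Filter.Tendsto (fun ℓ : ℝ => -(2 * ℓ) / r) Filter.atTop Filter.atBot := by
        have h1 : Filter.Tendsto (fun ℓ : ℝ => (2 / r) * ℓ) Filter.atTop Filter.atTop :=
          Filter.Tendsto.const_mul_atTop (by positivity) Filter.tendsto_id
        have h2 := Filter.tendsto_neg_atTop_atBot.comp h1
        apply h2.congr
        intro ℓ
        simp only [Function.comp_apply]
        field_simp
      exact Real.tendsto_exp_atBot.comp harg
    have hlin : Filter.Tendsto (fun ℓ : ℝ => Real.exp (-(2 * ℓ) / r) * (ℓ / r))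
        Filter.atTop (nhds 0) := by
      have h0 : Filter.Tendsto (fun x : ℝ => x ^ 1 * Real.exp (-x)) Filter.atTop (nhds 0) :=
        Real.tendsto_pow_mul_exp_neg_atTop_nhds_zero 1
      have harg : Filter.Tendsto (fun ℓ : ℝ => (2 / r) * ℓ) Filter.atTop Filter.atTop :=
        Filter.Tendsto.const_mul_atTop (by positivity) Filter.tendsto_id
      have h1 := h0.comp harg
      have h2 := h1.const_mul (1/2 : ℝ)
      rw [mul_zero] at h2
      apply h2.congr
      intro ℓ
      simp only [Function.comp_apply, pow_one]
      rw [show -(2 / r * ℓ) = -(2 * ℓ) / r by field_simp]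
      field_simp
    have hT : Filter.Tendsto g Filter.atTop
        (nhds (1 + (-(3 * r / 2)) * 0 + (0 + 0 * 2 + 0 * ((3 * r / 2) * 0)))) := by
      rw [hg]
      exact (tendsto_const_nhds.add (hinv.const_mul _)).add
        ((hlin.add (hexp.mul_const 2)).add (hexp.mul (hinv.const_mul _)))
    norm_num at hT
    apply hT.congr'
    filter_upwards [Filter.eventually_gt_atTop 0] with ℓ hℓ
    exact (heq ℓ hℓ).symm
  · -- boundedness
    refine ⟨4 / r, ?_⟩
    rintro x ⟨ℓ, hℓ, rfl⟩
    exact hbound2 ℓ hℓ
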